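/- arXiv:1403.5903 — 2 statements merged into one kernel-verified Lean document; each statement's English description precedes it below -/
import Mathlib

section
/- Let d ≥ 1, let D be a bounded Lipschitz domain in ℝ^d, let T > 0 and c₂ ≥ 1. Then there exist constants C₁, C₂, δ₀ > 0 (depending only on d, T, c₂ and D) such that for every t ∈ (0, T], every x ∈ D̄ and every δ ∈ (0, δ₀], (1/δ) ∫_{D_δ} t^{−d/2} exp(−|y − x|² / (c₂ t)) dy ≤ C₁/√t + C₂, where D_δ := {y ∈ D : dist(y, ∂D) < δ} and the integral is with respect to Lebesgue measure. -/
open MeasureTheory Metric Set Filter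

noncomputable section

/-- A bounded Lipschitz domain in `ℝ^d`: a nonempty bounded open set such that near every
boundary point, after an orthogonal change of coordinates, the boundary is the graph of a
Lipschitz function and the domain lies on one side of this graph. -/
def IsBoundedLipschitzDomain (d : ℕ) (D : Set (EuclideanSpace ℝ (Fin d))) : Prop :=
  D.Nonempty ∧ IsOpen D ∧ Bornology.IsBounded D ∧
    ∀ x ∈ frontier D,
      ∃ (e : EuclideanSpace ℝ (Fin d) ≃ₗᵢ[ℝ] EuclideanSpace ℝ (Fin d)) (i₀ : Fin d)
        (f : (Fin d → ℝ) → ℝ) (K : NNReal) (U : Set (EuclideanSpace ℝ (Fin d))),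
        LipschitzWith K f ∧ IsOpen U ∧ x ∈ U ∧
        D ∩ U = {y ∈ U | f (Function.update (fun i => e y i) i₀ 0) < e y i₀} ∧
        frontier D ∩ U = {y ∈ U | f (Function.update (fun i => e y i) i₀ 0) = e y i₀}


namespace GaussianStripAux

open ENNReal

lemma abs_coord_sub_le_dist {d : ℕ} (y z : EuclideanSpace ℝ (Fin d)) (i : Fin d) :
    |y i - z i| ≤ dist y z := by
  rw [EuclideanSpace.dist_eq, ← Real.sqrt_sq_eq_abs]
  apply Real.sqrt_le_sqrt
  have := Finset.single_le_sum (f := fun j => dist (y j) (z j) ^ 2)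
    (fun j _ => sq_nonneg _) (Finset.mem_univ i)
  simpa [Real.dist_eq, sq_abs] using this

lemma integral_gauss_shift (r a : ℝ) (hr : 0 < r) :
    ∫ s : ℝ, Real.exp (-(s - a)^2 / r) = Real.sqrt (Real.pi * r) := by
  calc ∫ s : ℝ, Real.exp (-(s - a)^2 / r)
      = ∫ s : ℝ, (fun u => Real.exp (-(1/r) * u^2)) (s - a) := by
        congr 1; ext s; congr 1; field_simp
    _ = ∫ s : ℝ, Real.exp (-(1/r) * s^2) :=
        integral_sub_right_eq_self (fun u => Real.exp (-(1/r) * u^2)) a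
    _ = Real.sqrt (Real.pi / (1/r)) := integral_gaussian (1/r)
    _ = Real.sqrt (Real.pi * r) := by rw [div_div_eq_mul_div, div_one]

lemma integrable_gauss_shift (r a : ℝ) (hr : 0 < r) :
    Integrable (fun s : ℝ => Real.exp (-(s - a)^2 / r)) := by
  have h : (fun s : ℝ => Real.exp (-(s - a)^2 / r))
      = fun s : ℝ => (fun u => Real.exp (-(1/r) * u^2)) (s - a) := by
    ext s; congr 1; field_simp
  rw [h]
  exact (integrable_exp_neg_mul_sq (by positivity : (0:ℝ) < 1/r)).comp_sub_right a

lemma lintegral_pi_gauss {ι : Type*} [Fintype ι] (r : ℝ) (hr : 0 < r) (w : ι → ℝ) :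
    ∫⁻ v : ι → ℝ, ∏ j, ENNReal.ofReal (Real.exp (-(v j - w j)^2 / r))
      = ENNReal.ofReal (Real.sqrt (Real.pi * r) ^ (Fintype.card ι)) := by
  have h1 : ∀ v : ι → ℝ, ∏ j, ENNReal.ofReal (Real.exp (-(v j - w j)^2 / r))
      = ENNReal.ofReal (∏ j, Real.exp (-(v j - w j)^2 / r)) := fun v =>
    (ENNReal.ofReal_prod_of_nonneg (fun i _ => Real.exp_nonneg _)).symm
  simp_rw [h1]
  rw [← ofReal_integral_eq_lintegral_ofReal]
  · rw [volume_pi, MeasureTheory.integral_fintype_prod_eq_prod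
      (f := fun j (s : ℝ) => Real.exp (-(s - w j)^2 / r))]
    rw [Finset.prod_congr rfl (fun j _ => integral_gauss_shift r (w j) hr),
      Finset.prod_const, Finset.card_univ]
  · exact Integrable.fintype_prod (fun j => integrable_gauss_shift r (w j) hr)
  · exact Filter.Eventually.of_forall fun v =>
      Finset.prod_nonneg fun j _ => Real.exp_nonneg _

lemma slab_lintegral {n : ℕ} (i₀ : Fin (n+1)) (f : (Fin (n+1) → ℝ) → ℝ) (hf : Measurable f)
    (w : Fin (n+1) → ℝ) (r b : ℝ) (hr : 0 < r) (hb : 0 ≤ b) :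
    ∫⁻ z in {z : Fin (n+1) → ℝ | f (Function.update z i₀ 0) < z i₀ ∧
        z i₀ < f (Function.update z i₀ 0) + b},
      ENNReal.ofReal (Real.exp (-(∑ i, (z i - w i)^2) / r))
      ≤ ENNReal.ofReal (b * Real.sqrt (Real.pi * r) ^ n) := by
  classical
  set S := {z : Fin (n+1) → ℝ | f (Function.update z i₀ 0) < z i₀ ∧
      z i₀ < f (Function.update z i₀ 0) + b} with hSdef
  set G' : (Fin (n+1) → ℝ) → ℝ≥0∞ :=
    fun z => ∏ j : Fin n, ENNReal.ofReal
      (Real.exp (-(z (i₀.succAbove j) - w (i₀.succAbove j))^2 / r)) with hG'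
  -- pointwise bound
  have hGG' : ∀ z : Fin (n+1) → ℝ,
      ENNReal.ofReal (Real.exp (-(∑ i, (z i - w i)^2) / r)) ≤ G' z := by
    intro z
    have hsum : Real.exp (-(∑ i, (z i - w i)^2) / r)
        = ∏ i, Real.exp (-(z i - w i)^2 / r) := by
      rw [← Real.exp_sum]
      congr 1
      rw [← Finset.sum_div, Finset.sum_neg_distrib, neg_div]
    have hprod : (∏ i, ENNReal.ofReal (Real.exp (-(z i - w i)^2 / r)))
        = ENNReal.ofReal (Real.exp (-(z i₀ - w i₀)^2 / r)) * G' z :=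
      Fin.prod_univ_succAbove (fun i => ENNReal.ofReal (Real.exp (-(z i - w i)^2 / r))) i₀
    calc ENNReal.ofReal (Real.exp (-(∑ i, (z i - w i)^2) / r))
        = ∏ i, ENNReal.ofReal (Real.exp (-(z i - w i)^2 / r)) := by
          rw [hsum, ENNReal.ofReal_prod_of_nonneg (fun i _ => Real.exp_nonneg _)]
      _ = ENNReal.ofReal (Real.exp (-(z i₀ - w i₀)^2 / r)) * G' z := hprod
      _ ≤ 1 * G' z := by
          gcongr
          exact ENNReal.ofReal_le_one.mpr (Real.exp_le_one_iff.mpr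
            (div_nonpos_of_nonpos_of_nonneg (neg_nonpos.mpr (sq_nonneg _)) hr.le))
      _ = G' z := one_mul _
  have hupdmeas : Measurable (fun z : Fin (n+1) → ℝ => Function.update z i₀ 0) := by
    refine measurable_pi_iff.mpr fun i => ?_
    simp only [Function.update_apply]
    exact Measurable.ite (MeasurableSet.const _) measurable_const (measurable_pi_apply i)
  have hSmeas : MeasurableSet S := by
    apply MeasurableSet.inter
    · exact measurableSet_lt (hf.comp hupdmeas) (measurable_pi_apply i₀)
    · exact measurableSet_lt (measurable_pi_apply i₀) ((hf.comp hupdmeas).add measurable_const)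
  have step1 : ∫⁻ z in S, ENNReal.ofReal (Real.exp (-(∑ i, (z i - w i)^2) / r))
      ≤ ∫⁻ z in S, G' z := lintegral_mono fun z => hGG' z
  refine step1.trans ?_
  -- split off coordinate i₀
  set X := MeasurableEquiv.piFinSuccAbove (fun _ : Fin (n+1) => ℝ) i₀ with hX
  have hXmp : MeasurePreserving X.symm volume volume :=
    (volume_preserving_piFinSuccAbove (fun _ : Fin (n+1) => ℝ) i₀).symm
  have hXsymm : ∀ (a : ℝ × (Fin n → ℝ)),
      X.symm a = Fin.insertNth (α := fun _ => ℝ) i₀ a.1 a.2 := fun a => rfl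
  set F : (Fin n → ℝ) → ℝ := fun v => f (Fin.insertNth (α := fun _ => ℝ) i₀ 0 v) with hFdef
  have hupd : ∀ (a : ℝ × (Fin n → ℝ)),
      Function.update (Fin.insertNth (α := fun _ => ℝ) i₀ a.1 a.2) i₀ 0
        = Fin.insertNth (α := fun _ => ℝ) i₀ 0 a.2 := by
    intro a
    funext i
    rcases eq_or_ne i i₀ with h | h
    · subst h; simp
    · obtain ⟨j, rfl⟩ := Fin.exists_succAbove_eq h
      rw [Function.update_of_ne (Fin.succAbove_ne i₀ j)]
      simp [Fin.insertNth_apply_succAbove]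
  set H : (Fin n → ℝ) → ℝ≥0∞ :=
    fun v => ∏ j : Fin n, ENNReal.ofReal
      (Real.exp (-(v j - w (i₀.succAbove j))^2 / r)) with hHdef
  have hHmeas : Measurable H := by
    refine Finset.measurable_prod _ fun j _ => ?_
    exact ENNReal.measurable_ofReal.comp
      ((Real.measurable_exp).comp (by fun_prop))
  have hHG' : ∀ a : ℝ × (Fin n → ℝ), G' (X.symm a) = H a.2 := by
    intro a
    rw [hXsymm]
    simp only [hG', hHdef, Fin.insertNth_apply_succAbove]
  have hFmeas : Measurable F := hf.comp (measurable_pi_iff.mpr fun i => by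
    rcases eq_or_ne i i₀ with h | h
    · subst h; simp only [Fin.insertNth_apply_same]; exact measurable_const
    · obtain ⟨j, rfl⟩ := Fin.exists_succAbove_eq h
      simp only [Fin.insertNth_apply_succAbove]; exact measurable_pi_apply j)
  set T := {a : ℝ × (Fin n → ℝ) | F a.2 < a.1 ∧ a.1 < F a.2 + b} with hTdef
  have hTmeas : MeasurableSet T := by
    apply MeasurableSet.inter
    · exact measurableSet_lt (hFmeas.comp measurable_snd) measurable_fst
    · exact measurableSet_lt measurable_fst ((hFmeas.comp measurable_snd).add measurable_const)
  have hpre : X.symm ⁻¹' S = T := by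
    ext a
    simp only [Set.mem_preimage, hSdef, Set.mem_setOf_eq, hXsymm, hupd,
      Fin.insertNth_apply_same, hFdef, hTdef]
  have htrans : ∫⁻ z in S, G' z = ∫⁻ a in T, H a.2 := by
    rw [← hXmp.setLIntegral_comp_preimage_emb X.symm.measurableEmbedding G' S, hpre]
    exact setLIntegral_congr_fun hTmeas (fun a _ => hHG' a)
  rw [htrans]
  -- Fubini
  have hind : ∀ a : ℝ × (Fin n → ℝ), T.indicator (fun a => H a.2) a
      = (Set.Ioo (F a.2) (F a.2 + b)).indicator (fun _ => H a.2) a.1 := by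
    intro a
    by_cases h : a ∈ T
    · rw [Set.indicator_of_mem h, Set.indicator_of_mem (Set.mem_Ioo.mpr h)]
    · rw [Set.indicator_of_notMem h, Set.indicator_of_notMem (fun hc => h (Set.mem_Ioo.mp hc))]
  calc ∫⁻ a in T, H a.2
      = ∫⁻ a : ℝ × (Fin n → ℝ), T.indicator (fun a => H a.2) a := (lintegral_indicator hTmeas _).symm
    _ = ∫⁻ v : Fin n → ℝ, ∫⁻ s : ℝ, T.indicator (fun a => H a.2) (s, v) := by
        rw [Measure.volume_eq_prod, lintegral_prod_symm]
        exact ((hHmeas.comp measurable_snd).indicator hTmeas).aemeasurable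
    _ = ∫⁻ v : Fin n → ℝ, H v * ENNReal.ofReal b := by
        refine lintegral_congr fun v => ?_
        simp_rw [hind]
        rw [lintegral_indicator_const measurableSet_Ioo, Real.volume_Ioo, add_sub_cancel_left]
    _ = (∫⁻ v : Fin n → ℝ, H v) * ENNReal.ofReal b := lintegral_mul_const _ hHmeas
    _ = ENNReal.ofReal (Real.sqrt (Real.pi * r) ^ (Fintype.card (Fin n))) * ENNReal.ofReal b := by
        rw [lintegral_pi_gauss r hr (fun j => w (i₀.succAbove j))]
    _ ≤ ENNReal.ofReal (b * Real.sqrt (Real.pi * r) ^ n) := by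
        rw [← ENNReal.ofReal_mul (by positivity), Fintype.card_fin, mul_comm]

lemma slab_lintegral_euclidean {n : ℕ}
    (e : EuclideanSpace ℝ (Fin (n+1)) ≃ₗᵢ[ℝ] EuclideanSpace ℝ (Fin (n+1)))
    (i₀ : Fin (n+1)) (f : (Fin (n+1) → ℝ) → ℝ) (hf : Measurable f)
    (x : EuclideanSpace ℝ (Fin (n+1))) (r b : ℝ) (hr : 0 < r) (hb : 0 ≤ b) :
    ∫⁻ y in {y : EuclideanSpace ℝ (Fin (n+1)) |
        f (Function.update (fun i => e y i) i₀ 0) < e y i₀ ∧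
        e y i₀ < f (Function.update (fun i => e y i) i₀ 0) + b},
      ENNReal.ofReal (Real.exp (-(dist y x ^ 2) / r))
      ≤ ENNReal.ofReal (b * Real.sqrt (Real.pi * r) ^ n) := by
  classical
  set m : EuclideanSpace ℝ (Fin (n+1)) ≃ᵐ (Fin (n+1) → ℝ) :=
    e.toHomeomorph.toMeasurableEquiv.trans (MeasurableEquiv.toLp 2 (Fin (n+1) → ℝ)).symm with hm
  have hmp : MeasurePreserving m volume volume :=
    (EuclideanSpace.volume_preserving_symm_measurableEquiv_toLp (Fin (n+1))).comp e.measurePreserving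
  set w : Fin (n+1) → ℝ := fun i => e x i with hw
  set S' := {z : Fin (n+1) → ℝ | f (Function.update z i₀ 0) < z i₀ ∧
      z i₀ < f (Function.update z i₀ 0) + b} with hS'
  have hpre : {y : EuclideanSpace ℝ (Fin (n+1)) |
      f (Function.update (fun i => e y i) i₀ 0) < e y i₀ ∧
      e y i₀ < f (Function.update (fun i => e y i) i₀ 0) + b} = m ⁻¹' S' := rfl
  have hdist : ∀ y : EuclideanSpace ℝ (Fin (n+1)),
      ENNReal.ofReal (Real.exp (-(dist y x ^ 2) / r))
      = ENNReal.ofReal (Real.exp (-(∑ i, (m y i - w i)^2) / r)) := by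
    intro y
    have h1 : dist y x = dist (e y) (e x) := (e.dist_map y x).symm
    have h2 : dist y x ^ 2 = ∑ i, (m y i - w i)^2 := by
      rw [h1, EuclideanSpace.dist_eq,
        Real.sq_sqrt (Finset.sum_nonneg fun i _ => sq_nonneg (dist (e y i) (e x i)))]
      refine Finset.sum_congr rfl fun i _ => ?_
      rw [Real.dist_eq, sq_abs]
      rfl
    rw [h2]
  rw [hpre]
  calc ∫⁻ y in m ⁻¹' S', ENNReal.ofReal (Real.exp (-(dist y x ^ 2) / r))
      = ∫⁻ y in m ⁻¹' S',
          (fun z => ENNReal.ofReal (Real.exp (-(∑ i, (z i - w i)^2) / r))) (m y) := by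
        exact lintegral_congr fun y => hdist y
    _ = ∫⁻ z in S', ENNReal.ofReal (Real.exp (-(∑ i, (z i - w i)^2) / r)) :=
        hmp.setLIntegral_comp_preimage_emb m.measurableEmbedding
          (fun z => ENNReal.ofReal (Real.exp (-(∑ i, (z i - w i)^2) / r))) S'
    _ ≤ ENNReal.ofReal (b * Real.sqrt (Real.pi * r) ^ n) :=
        slab_lintegral i₀ f hf w r b hr hb

end GaussianStripAux

open GaussianStripAux ENNReal

/-- boundary-strip estimate (2.5) for the Gaussian upper bound. -/
theorem gaussian_boundary_strip_estimate
    (d : ℕ) (hd : 1 ≤ d) (D : Set (EuclideanSpace ℝ (Fin d)))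
    (hD : IsBoundedLipschitzDomain d D) (T : ℝ) (hT : 0 < T) (c₂ : ℝ) (hc₂ : 1 ≤ c₂) :
    ∃ C₁ : ℝ, 0 < C₁ ∧ ∃ C₂ : ℝ, 0 < C₂ ∧ ∃ δ₀ : ℝ, 0 < δ₀ ∧
      ∀ t : ℝ, 0 < t → t ≤ T → ∀ x ∈ closure D, ∀ δ : ℝ, 0 < δ → δ ≤ δ₀ →
        δ⁻¹ * (∫ y in {y ∈ D | Metric.infDist y (frontier D) < δ},
            t ^ (-(d : ℝ) / 2) * Real.exp (-(dist y x ^ 2) / (c₂ * t)))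
          ≤ C₁ / Real.sqrt t + C₂ := by
  classical
  obtain ⟨n, rfl⟩ : ∃ n, d = n + 1 := ⟨d - 1, (Nat.succ_pred_eq_of_pos hd).symm⟩
  obtain ⟨hne, hopen, hbdd, hgraph⟩ := hD
  have hc₂' : (0:ℝ) < c₂ := lt_of_lt_of_le one_pos hc₂
  -- frontier is compact and nonempty
  have hfr_compact : IsCompact (frontier D) :=
    Metric.isCompact_of_isClosed_isBounded isClosed_frontier
      ((hbdd.closure).subset frontier_subset_closure)
  have hfr_ne : (frontier D).Nonempty := by
    by_contra h
    rw [Set.not_nonempty_iff_eq_empty] at h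
    have h2 : closure D \ D = ∅ := hopen.frontier_eq ▸ h
    have hclosed : IsClosed D := isClosed_of_closure_subset (Set.diff_eq_empty.mp h2)
    rcases isClopen_iff.mp ⟨hclosed, hopen⟩ with h3 | h3
    · exact hne.ne_empty h3
    · obtain ⟨C, hC⟩ := hbdd.exists_norm_le
      obtain ⟨v, hv⟩ := NormedSpace.exists_lt_norm ℝ (EuclideanSpace ℝ (Fin (n+1))) C
      exact absurd (hC v (h3 ▸ Set.mem_univ v)) (not_le.mpr hv)
  -- choose local graph data and radii
  choose e i₀ ff K U hlip hUopen hxU hDU hfrU using hgraph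
  have hball : ∀ x (hx : x ∈ frontier D), ∃ ρ : ℝ, 0 < ρ ∧ ball x (2*ρ) ⊆ U x hx := by
    intro x hx
    obtain ⟨ε, hε, hsub⟩ := Metric.isOpen_iff.mp (hUopen x hx) x (hxU x hx)
    exact ⟨ε/2, by positivity, by rw [show 2*(ε/2) = ε by ring]; exact hsub⟩
  choose ρ hρpos hρball using hball
  obtain ⟨s, hscover⟩ := hfr_compact.elim_finite_subcover
      (fun z : frontier D => ball (z : EuclideanSpace ℝ (Fin (n+1))) (ρ z.1 z.2))
      (fun z => isOpen_ball)
      (fun x hx => Set.mem_iUnion.mpr ⟨⟨x, hx⟩, mem_ball_self (hρpos x hx)⟩)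
  have hs : s.Nonempty := by
    obtain ⟨x, hx⟩ := hfr_ne
    obtain ⟨z, hz1, hz2⟩ := Set.mem_iUnion₂.mp (hscover hx)
    exact ⟨z, hz1⟩
  set δ₀ := s.inf' hs (fun z => ρ z.1 z.2) with hδ₀def
  have hδ₀pos : 0 < δ₀ := (Finset.lt_inf'_iff hs).mpr (fun z _ => hρpos z.1 z.2)
  set Cs : ℝ := ∑ z ∈ s, (1 + (K z.1 z.2 : ℝ)) * Real.sqrt (Real.pi * c₂) ^ n with hCs
  have hCs0 : 0 ≤ Cs := Finset.sum_nonneg fun z _ => by positivity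
  refine ⟨Cs + 1, by positivity, 1, one_pos, δ₀, hδ₀pos, ?_⟩
  intro t ht htT x hx δ hδ hδδ₀
  -- slabs
  set Slab : (z : frontier D) → ℝ → Set (EuclideanSpace ℝ (Fin (n+1))) := fun z b =>
    {y | ff z.1 z.2 (Function.update (fun i => e z.1 z.2 y i) (i₀ z.1 z.2) 0)
          < e z.1 z.2 y (i₀ z.1 z.2) ∧
        e z.1 z.2 y (i₀ z.1 z.2)
          < ff z.1 z.2 (Function.update (fun i => e z.1 z.2 y i) (i₀ z.1 z.2) 0) + b}
    with hSlab
  -- inclusion of the boundary strip into the union of slabs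
  have hincl : {y | y ∈ D ∧ Metric.infDist y (frontier D) < δ}
      ⊆ ⋃ z : {w : frontier D // w ∈ s}, Slab z.1 ((1 + (K z.1.1 z.1.2 : ℝ)) * δ) := by
    rintro y ⟨hyD, hyd⟩
    obtain ⟨zb, hzb, hdyz⟩ := (Metric.infDist_lt_iff hfr_ne).mp hyd
    obtain ⟨z, hzs, hzball⟩ := Set.mem_iUnion₂.mp (hscover hzb)
    refine Set.mem_iUnion.mpr ⟨⟨z, hzs⟩, ?_⟩
    have hδρ : δ ≤ ρ z.1 z.2 := le_trans hδδ₀ (Finset.inf'_le _ hzs)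
    have hzball' : dist zb z.1 < ρ z.1 z.2 := mem_ball.mp hzball
    have hyU : y ∈ U z.1 z.2 := hρball z.1 z.2 (mem_ball.mpr (by
      calc dist y z.1 ≤ dist y zb + dist zb z.1 := dist_triangle _ _ _
        _ < δ + ρ z.1 z.2 := add_lt_add hdyz hzball'
        _ ≤ 2 * ρ z.1 z.2 := by linarith))
    have hzbU : zb ∈ U z.1 z.2 := hρball z.1 z.2 (mem_ball.mpr
      (by linarith [hρpos z.1 z.2]))
    have h1 : ff z.1 z.2 (Function.update (fun i => e z.1 z.2 y i) (i₀ z.1 z.2) 0)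
        < e z.1 z.2 y (i₀ z.1 z.2) := by
      have hmem : y ∈ D ∩ U z.1 z.2 := ⟨hyD, hyU⟩
      rw [hDU z.1 z.2] at hmem
      exact hmem.2
    have h2 : ff z.1 z.2 (Function.update (fun i => e z.1 z.2 zb i) (i₀ z.1 z.2) 0)
        = e z.1 z.2 zb (i₀ z.1 z.2) := by
      have hmem : zb ∈ frontier D ∩ U z.1 z.2 := ⟨hzb, hzbU⟩
      rw [hfrU z.1 z.2] at hmem
      exact hmem.2
    refine ⟨h1, ?_⟩
    have hcoord : |e z.1 z.2 y (i₀ z.1 z.2) - e z.1 z.2 zb (i₀ z.1 z.2)| ≤ dist y zb := by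
      have h := abs_coord_sub_le_dist (e z.1 z.2 y) (e z.1 z.2 zb) (i₀ z.1 z.2)
      rwa [(e z.1 z.2).dist_map y zb] at h
    have hdu : dist (Function.update (fun i => e z.1 z.2 zb i) (i₀ z.1 z.2) 0)
        (Function.update (fun i => e z.1 z.2 y i) (i₀ z.1 z.2) 0) ≤ dist y zb := by
      rw [dist_pi_le_iff dist_nonneg]
      intro i
      rcases eq_or_ne i (i₀ z.1 z.2) with h | h
      · subst h; simpa using dist_nonneg
      · rw [Function.update_of_ne h, Function.update_of_ne h]
        have h' := abs_coord_sub_le_dist (e z.1 z.2 zb) (e z.1 z.2 y) i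
        rw [(e z.1 z.2).dist_map zb y, dist_comm zb y] at h'
        rwa [Real.dist_eq]
    have hflip : |ff z.1 z.2 (Function.update (fun i => e z.1 z.2 zb i) (i₀ z.1 z.2) 0)
        - ff z.1 z.2 (Function.update (fun i => e z.1 z.2 y i) (i₀ z.1 z.2) 0)|
        ≤ (K z.1 z.2 : ℝ) * dist y zb := by
      calc |ff z.1 z.2 _ - ff z.1 z.2 _| = dist (ff z.1 z.2 _) (ff z.1 z.2 _) :=
            (Real.dist_eq _ _).symm
        _ ≤ (K z.1 z.2 : ℝ) * dist _ _ := (hlip z.1 z.2).dist_le_mul _ _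
        _ ≤ (K z.1 z.2 : ℝ) * dist y zb := by
            exact mul_le_mul_of_nonneg_left hdu (K z.1 z.2).2
    have e1 : e z.1 z.2 y (i₀ z.1 z.2) - e z.1 z.2 zb (i₀ z.1 z.2) ≤ dist y zb :=
      le_trans (le_abs_self _) hcoord
    have e2 : ff z.1 z.2 (Function.update (fun i => e z.1 z.2 zb i) (i₀ z.1 z.2) 0)
        - ff z.1 z.2 (Function.update (fun i => e z.1 z.2 y i) (i₀ z.1 z.2) 0)
        ≤ (K z.1 z.2 : ℝ) * dist y zb := le_trans (le_abs_self _) hflip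
    have hKpos : (0:ℝ) < 1 + (K z.1 z.2 : ℝ) := by positivity
    calc e z.1 z.2 y (i₀ z.1 z.2)
        ≤ ff z.1 z.2 (Function.update (fun i => e z.1 z.2 y i) (i₀ z.1 z.2) 0)
          + (1 + (K z.1 z.2 : ℝ)) * dist y zb := by nlinarith [e1, e2, h2]
      _ < ff z.1 z.2 (Function.update (fun i => e z.1 z.2 y i) (i₀ z.1 z.2) 0)
          + (1 + (K z.1 z.2 : ℝ)) * δ := by
          have := mul_lt_mul_of_pos_left hdyz hKpos
          linarith
  -- analytic part
  set A := {y | y ∈ D ∧ Metric.infDist y (frontier D) < δ} with hA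
  set tp := t ^ (-((n+1 : ℕ) : ℝ) / 2) with htpdef
  have htp : 0 < tp := Real.rpow_pos_of_pos ht _
  have hct : 0 < c₂ * t := mul_pos hc₂' ht
  set g : EuclideanSpace ℝ (Fin (n+1)) → ℝ :=
    fun y => tp * Real.exp (-(dist y x ^ 2) / (c₂ * t)) with hg
  have hexp_cont : Continuous fun y : EuclideanSpace ℝ (Fin (n+1)) =>
      Real.exp (-(dist y x ^ 2) / (c₂ * t)) :=
    Real.continuous_exp.comp ((((continuous_id.dist continuous_const).pow 2).neg).div_const _)
  have hgcont : Continuous g := continuous_const.mul hexp_cont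
  have key1 : ∫ y in A, g y = (∫⁻ y in A, ENNReal.ofReal (g y)).toReal :=
    integral_eq_lintegral_of_nonneg_ae (ae_of_all _ fun y => by positivity)
      hgcont.aestronglyMeasurable.restrict
  -- per-slab bound
  have hexp_meas : Measurable fun y : EuclideanSpace ℝ (Fin (n+1)) =>
      ENNReal.ofReal (Real.exp (-(dist y x ^ 2) / (c₂ * t))) :=
    ENNReal.measurable_ofReal.comp hexp_cont.measurable
  set M : frontier D → ℝ := fun z =>
    tp * ((1 + (K z.1 z.2 : ℝ)) * δ * Real.sqrt (Real.pi * (c₂ * t)) ^ n) with hM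
  have key3 : ∀ z : frontier D,
      ∫⁻ y in Slab z ((1 + (K z.1 z.2 : ℝ)) * δ), ENNReal.ofReal (g y)
        ≤ ENNReal.ofReal (M z) := by
    intro z
    have heq : ∀ y, ENNReal.ofReal (g y)
        = ENNReal.ofReal tp * ENNReal.ofReal (Real.exp (-(dist y x ^ 2) / (c₂ * t))) :=
      fun y => ENNReal.ofReal_mul htp.le
    calc ∫⁻ y in Slab z ((1 + (K z.1 z.2 : ℝ)) * δ), ENNReal.ofReal (g y)
        = ∫⁻ y in Slab z ((1 + (K z.1 z.2 : ℝ)) * δ),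
            ENNReal.ofReal tp * ENNReal.ofReal (Real.exp (-(dist y x ^ 2) / (c₂ * t))) :=
          lintegral_congr fun y => heq y
      _ = ENNReal.ofReal tp * ∫⁻ y in Slab z ((1 + (K z.1 z.2 : ℝ)) * δ),
            ENNReal.ofReal (Real.exp (-(dist y x ^ 2) / (c₂ * t))) :=
          lintegral_const_mul _ hexp_meas
      _ ≤ ENNReal.ofReal tp * ENNReal.ofReal
            ((1 + (K z.1 z.2 : ℝ)) * δ * Real.sqrt (Real.pi * (c₂ * t)) ^ n) := by
          refine mul_le_mul_right ?_ _
          exact slab_lintegral_euclidean (e z.1 z.2) (i₀ z.1 z.2) (ff z.1 z.2)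
            (hlip z.1 z.2).continuous.measurable x (c₂ * t)
            ((1 + (K z.1 z.2 : ℝ)) * δ) hct (by positivity)
      _ = ENNReal.ofReal (M z) := (ENNReal.ofReal_mul htp.le).symm
  set R : ℝ := ∑ z ∈ s.attach, M z.1 with hR
  have hM0 : ∀ z : frontier D, 0 ≤ M z := fun z => by positivity
  have hR0 : 0 ≤ R := Finset.sum_nonneg fun z _ => hM0 z.1
  have key4 : (∫⁻ y in A, ENNReal.ofReal (g y)) ≤ ENNReal.ofReal R := by
    calc ∫⁻ y in A, ENNReal.ofReal (g y)
        ≤ ∫⁻ y in ⋃ z : {w : frontier D // w ∈ s},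
            Slab z.1 ((1 + (K z.1.1 z.1.2 : ℝ)) * δ), ENNReal.ofReal (g y) :=
          lintegral_mono_set hincl
      _ ≤ ∑' z : {w : frontier D // w ∈ s},
            ∫⁻ y in Slab z.1 ((1 + (K z.1.1 z.1.2 : ℝ)) * δ), ENNReal.ofReal (g y) :=
          lintegral_iUnion_le _ _
      _ = ∑ z ∈ s.attach,
            ∫⁻ y in Slab z.1 ((1 + (K z.1.1 z.1.2 : ℝ)) * δ), ENNReal.ofReal (g y) :=
          tsum_fintype _
      _ ≤ ∑ z ∈ s.attach, ENNReal.ofReal (M z.1) :=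
          Finset.sum_le_sum fun z _ => key3 z.1
      _ = ENNReal.ofReal R := (ENNReal.ofReal_sum_of_nonneg fun z _ => hM0 z.1).symm
  have key5 : ∫ y in A, g y ≤ R := by
    rw [key1]
    calc (∫⁻ y in A, ENNReal.ofReal (g y)).toReal
        ≤ (ENNReal.ofReal R).toReal := ENNReal.toReal_mono ENNReal.ofReal_ne_top key4
      _ = R := ENNReal.toReal_ofReal hR0
  -- algebra
  have hsq : 0 < Real.sqrt t := Real.sqrt_pos.mpr ht
  have hkey : tp * Real.sqrt t ^ n = (Real.sqrt t)⁻¹ := by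
    have h1 : -(((n+1 : ℕ)) : ℝ)/2 + (1/2) * (n : ℝ) = -(1/2) := by push_cast; ring
    rw [htpdef, Real.sqrt_eq_rpow, ← Real.rpow_natCast (t ^ ((1:ℝ)/2)) n,
      ← Real.rpow_mul ht.le, ← Real.rpow_add ht, h1, Real.rpow_neg ht.le]
  have key6 : δ⁻¹ * R ≤ (Cs + 1) / Real.sqrt t := by
    have hsplit : Real.sqrt (Real.pi * (c₂ * t)) ^ n
        = Real.sqrt (Real.pi * c₂) ^ n * Real.sqrt t ^ n := by
      rw [← mul_assoc, Real.sqrt_mul (by positivity) t, mul_pow]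
    have hterm : ∀ z : frontier D, δ⁻¹ * M z
        = (1 + (K z.1 z.2 : ℝ)) * Real.sqrt (Real.pi * c₂) ^ n * (Real.sqrt t)⁻¹ := by
      intro z
      rw [hM]
      dsimp only
      rw [hsplit]
      rw [show δ⁻¹ * (tp * ((1 + (K z.1 z.2 : ℝ)) * δ *
          (Real.sqrt (Real.pi * c₂) ^ n * Real.sqrt t ^ n)))
        = (δ⁻¹ * δ) * ((1 + (K z.1 z.2 : ℝ)) * Real.sqrt (Real.pi * c₂) ^ n
            * (tp * Real.sqrt t ^ n)) from by ring]
      rw [inv_mul_cancel₀ hδ.ne', one_mul, hkey]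
    calc δ⁻¹ * R = ∑ z ∈ s.attach, δ⁻¹ * M z.1 := by rw [hR, Finset.mul_sum]
      _ = ∑ z ∈ s.attach, (1 + (K z.1.1 z.1.2 : ℝ)) * Real.sqrt (Real.pi * c₂) ^ n
            * (Real.sqrt t)⁻¹ := Finset.sum_congr rfl fun z _ => hterm z.1
      _ = (∑ z ∈ s.attach, (1 + (K z.1.1 z.1.2 : ℝ)) * Real.sqrt (Real.pi * c₂) ^ n)
            * (Real.sqrt t)⁻¹ := by rw [Finset.sum_mul]
      _ = Cs * (Real.sqrt t)⁻¹ := by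
          rw [hCs, Finset.sum_attach s (fun z => (1 + (K z.1 z.2 : ℝ))
            * Real.sqrt (Real.pi * c₂) ^ n)]
      _ ≤ (Cs + 1) * (Real.sqrt t)⁻¹ := by
          apply mul_le_mul_of_nonneg_right (by linarith) (inv_nonneg.mpr hsq.le)
      _ = (Cs + 1) / Real.sqrt t := (div_eq_mul_inv _ _).symm
  calc δ⁻¹ * ∫ y in A, g y ≤ δ⁻¹ * R :=
        mul_le_mul_of_nonneg_left key5 (inv_nonneg.mpr hδ.le)
    _ ≤ (Cs + 1) / Real.sqrt t := key6
    _ ≤ (Cs + 1) / Real.sqrt t + 1 := le_add_of_nonneg_right zero_le_one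


end
end

section
/- Let d ≥ 1, let D be a bounded Lipschitz domain in ℝ^d, let T > 0 and c₂ ≥ 1. Then there exist constants C₁, C₂ > 0 (depending only on d, T, c₂ and D) such that for every t ∈ (0, T] and every x ∈ D̄, ∫_{∂D} t^{−d/2} exp(−|y − x|² / (c₂ t)) dH^{d−1}(y) ≤ C₁/√t + C₂, where the integral is with respect to the (d−1)-dimensional Hausdorff measure restricted to ∂D. -/
open MeasureTheory Metric Set Filter
open scoped ENNReal NNReal

noncomputable section

lemma coord_dist_le {d : ℕ} (x y : EuclideanSpace ℝ (Fin d)) (i : Fin d) :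
    dist (x i) (y i) ≤ dist x y := by
  rw [EuclideanSpace.dist_eq]
  have h1 : dist (x i) (y i) ^ 2 ≤ ∑ j, dist (x j) (y j) ^ 2 :=
    Finset.single_le_sum (f := fun j => dist (x j) (y j) ^ 2)
      (fun j _ => sq_nonneg _) (Finset.mem_univ i)
  calc dist (x i) (y i) = Real.sqrt (dist (x i) (y i) ^ 2) := by
        rw [Real.sqrt_sq dist_nonneg]
    _ ≤ _ := Real.sqrt_le_sqrt h1

theorem chart_bound (d : ℕ) (hd : 1 ≤ d) (B : Set (EuclideanSpace ℝ (Fin d)))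
    (e : EuclideanSpace ℝ (Fin d) ≃ₗᵢ[ℝ] EuclideanSpace ℝ (Fin d)) (i₀ : Fin d)
    (f : (Fin d → ℝ) → ℝ) (K : NNReal) (hf : LipschitzWith K f)
    (hB : ∀ y ∈ B, f (Function.update (fun i => e y i) i₀ 0) = e y i₀) :
    ∃ C : ℝ≥0∞, C ≠ ∞ ∧ ∀ (c : EuclideanSpace ℝ (Fin d)) (r : ℝ),
      μH[(d : ℝ) - 1] (B ∩ Metric.closedBall c r) ≤ C * ENNReal.ofReal r ^ (d - 1) := by
  classical
  set ι := {i : Fin d // i ≠ i₀} with hι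
  set ext : (ι → ℝ) → (Fin d → ℝ) := fun v i => if h : i = i₀ then 0 else v ⟨i, h⟩ with hext
  -- ext is 1-Lipschitz (sup metrics)
  have hext_lip : ∀ v w : ι → ℝ, dist (ext v) (ext w) ≤ dist v w := by
    intro v w
    refine (dist_pi_le_iff dist_nonneg).2 fun i => ?_
    by_cases h : i = i₀
    · simp only [hext, h]; simpa using dist_nonneg (x := v) (y := w)
    · simpa [hext, h] using dist_le_pi_dist v w ⟨i, h⟩
  set L : NNReal := NNReal.sqrt (d * (1 + K ^ 2)) with hL
  set g : (ι → ℝ) → EuclideanSpace ℝ (Fin d) :=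
    fun v => e.symm ((EuclideanSpace.equiv (Fin d) ℝ).symm
      (Function.update (ext v) i₀ (f (ext v)))) with hg
  have hglip : LipschitzWith L g := by
    refine LipschitzWith.of_dist_le_mul fun v w => ?_
    have hdist : dist (g v) (g w) =
        dist ((EuclideanSpace.equiv (Fin d) ℝ).symm (Function.update (ext v) i₀ (f (ext v))))
          ((EuclideanSpace.equiv (Fin d) ℝ).symm (Function.update (ext w) i₀ (f (ext w)))) := by
      rw [hg]; exact e.symm.dist_map _ _
    rw [hdist, EuclideanSpace.dist_eq]
    have hco : ∀ i : Fin d,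
        dist (((EuclideanSpace.equiv (Fin d) ℝ).symm (Function.update (ext v) i₀ (f (ext v)))) i)
          (((EuclideanSpace.equiv (Fin d) ℝ).symm (Function.update (ext w) i₀ (f (ext w)))) i) ^ 2
          ≤ (1 + (K:ℝ) ^ 2) * dist v w ^ 2 := by
      intro i
      by_cases h : i = i₀
      · subst h
        have : dist (f (ext v)) (f (ext w)) ≤ K * dist v w :=
          (hf.dist_le_mul _ _).trans (by
            have := hext_lip v w
            nlinarith [NNReal.coe_nonneg K, dist_nonneg (x := ext v) (y := ext w)])
        have h2 : dist (f (ext v)) (f (ext w)) ^ 2 ≤ (K:ℝ)^2 * dist v w ^ 2 := by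
          nlinarith [dist_nonneg (x := f (ext v)) (y := f (ext w)),
            dist_nonneg (x := v) (y := w), NNReal.coe_nonneg K]
        simpa [EuclideanSpace.equiv, Function.update_self] using
          h2.trans (by nlinarith [sq_nonneg (dist v w)])
      · have h1 : dist (ext v i) (ext w i) ≤ dist v w := by
          simpa [hext, h] using dist_le_pi_dist v w ⟨i, h⟩
        have : dist (ext v i) (ext w i) ^ 2 ≤ dist v w ^ 2 := by
          nlinarith [dist_nonneg (x := ext v i) (y := ext w i)]
        simpa [EuclideanSpace.equiv, Function.update_of_ne h] using
          this.trans (by nlinarith [mul_nonneg (sq_nonneg (K:ℝ)) (sq_nonneg (dist v w))])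
    refine le_trans (Real.sqrt_le_sqrt (Finset.sum_le_sum fun i _ => hco i)) ?_
    have hsum : (∑ _i : Fin d, (1 + (K:ℝ)^2) * dist v w ^ 2)
        = (d * (1 + (K:ℝ)^2)) * dist v w ^ 2 := by
      rw [Finset.sum_const, Finset.card_univ, Fintype.card_fin]; ring_nf
    rw [hsum, Real.sqrt_mul (by positivity), Real.sqrt_sq dist_nonneg]
    gcongr
    rw [hL, Real.coe_sqrt]
    push_cast
    exact le_of_eq rfl
  -- the boundary piece is contained in the image of a ball under `g`
  have hincl : ∀ (c : EuclideanSpace ℝ (Fin d)) (r : ℝ), 0 ≤ r →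
      B ∩ closedBall c r ⊆ g '' (closedBall (fun j : ι => e c j.1) r) := by
    intro c r hr y hy
    obtain ⟨hyB, hyc⟩ := hy
    rw [mem_closedBall] at hyc
    refine ⟨fun j => e y j.1, ?_, ?_⟩
    · rw [mem_closedBall]
      refine (dist_pi_le_iff hr).2 fun j => ?_
      calc dist (e y j.1) (e c j.1) ≤ dist (e y) (e c) := coord_dist_le _ _ _
        _ = dist y c := e.dist_map y c
        _ ≤ r := hyc
    · have hv : ext (fun j => e y j.1) = Function.update (fun i => e y i) i₀ 0 := by
        funext i
        by_cases h : i = i₀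
        · simp [hext, h, Function.update]
        · simp [hext, h, Function.update_of_ne h]
      have hupd : Function.update (ext (fun j => e y j.1)) i₀ (f (ext (fun j => e y j.1)))
          = (fun i => e y i) := by
        rw [hv, hB y hyB]
        rw [Function.update_idem]
        exact Function.update_eq_self i₀ (fun i => e y i)
      show e.symm ((EuclideanSpace.equiv (Fin d) ℝ).symm
        (Function.update (ext (fun j => e y j.1)) i₀ (f (ext (fun j => e y j.1))))) = y
      rw [hupd]
      exact e.symm_apply_apply y
  have hd1 : (0:ℝ) ≤ (d : ℝ) - 1 := by
    have : (1:ℝ) ≤ (d:ℝ) := by exact_mod_cast hd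
    linarith
  have hcard : Fintype.card ι = d - 1 := by
    have h1 : Fintype.card {i : Fin d // ¬ (i = i₀)} = d - 1 := by
      rw [Fintype.card_subtype_compl, Fintype.card_subtype_eq, Fintype.card_fin]
    simp only [hι]; exact h1
  have hμpi : (μH[(d : ℝ) - 1] : Measure (ι → ℝ)) = volume := by
    have hc : ((d : ℝ) - 1) = ((Fintype.card ι : ℕ) : ℝ) := by
      rw [hcard]
      push_cast [Nat.cast_sub hd]
      ring
    rw [hc, MeasureTheory.hausdorffMeasure_pi_real]
  refine ⟨(L : ℝ≥0∞) ^ ((d:ℝ) - 1) * 2 ^ (d - 1), ?_, ?_⟩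
  · exact ENNReal.mul_ne_top (ENNReal.rpow_ne_top_of_nonneg hd1 ENNReal.coe_ne_top)
      (ENNReal.pow_ne_top ENNReal.ofNat_ne_top)
  intro c r
  rcases lt_or_ge r 0 with hr | hr
  · simp [Metric.closedBall_eq_empty.2 hr]
  calc μH[(d : ℝ) - 1] (B ∩ closedBall c r)
      ≤ μH[(d : ℝ) - 1] (g '' closedBall (fun j : ι => e c j.1) r) :=
        measure_mono (hincl c r hr)
    _ ≤ (L : ℝ≥0∞) ^ ((d:ℝ) - 1) * μH[(d : ℝ) - 1] (closedBall (fun j : ι => e c j.1) r) :=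
        hglip.hausdorffMeasure_image_le hd1 _
    _ = (L : ℝ≥0∞) ^ ((d:ℝ) - 1) * (ENNReal.ofReal (2 * r)) ^ (d - 1) := by
        rw [hμpi, closedBall_pi _ hr, volume_pi_pi]
        simp [Real.volume_closedBall, hcard]
    _ ≤ (L : ℝ≥0∞) ^ ((d:ℝ) - 1) * 2 ^ (d - 1) * ENNReal.ofReal r ^ (d - 1) := by
        rw [ENNReal.ofReal_mul (by norm_num : (0:ℝ) ≤ 2), mul_pow, ← mul_assoc]
        simp [ENNReal.ofReal_ofNat]

theorem ahlfors (d : ℕ) (hd : 1 ≤ d) (D : Set (EuclideanSpace ℝ (Fin d)))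
    (hD : IsBoundedLipschitzDomain d D) :
    ∃ A : ℝ≥0∞, A ≠ ∞ ∧ ∀ (x : EuclideanSpace ℝ (Fin d)) (r : ℝ),
      μH[(d : ℝ) - 1] (frontier D ∩ Metric.closedBall x r)
        ≤ A * ENNReal.ofReal r ^ (d - 1) := by
  classical
  obtain ⟨hne, hopen, hbdd, hch⟩ := hD
  choose e i₀ f K U hf hUo hxU hDU hfr using hch
  have hfb : Bornology.IsBounded (frontier D) :=
    hbdd.closure.subset frontier_subset_closure
  have hfc : IsCompact (frontier D) :=
    Metric.isCompact_of_isClosed_isBounded isClosed_frontier hfb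
  have hcb : ∀ z : frontier D, ∃ C : ℝ≥0∞, C ≠ ∞ ∧
      ∀ (c : EuclideanSpace ℝ (Fin d)) (r : ℝ),
        μH[(d : ℝ) - 1] ((frontier D ∩ U z.1 z.2) ∩ closedBall c r)
          ≤ C * ENNReal.ofReal r ^ (d - 1) := by
    intro z
    refine chart_bound d hd _ (e z.1 z.2) (i₀ z.1 z.2) (f z.1 z.2) (K z.1 z.2)
      (hf z.1 z.2) ?_
    intro y hy
    have h2 := hfr z.1 z.2
    have : y ∈ {y ∈ U z.1 z.2 | f z.1 z.2 (Function.update (fun i => e z.1 z.2 y i)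
        (i₀ z.1 z.2) 0) = e z.1 z.2 y (i₀ z.1 z.2)} := h2 ▸ hy
    exact this.2
  choose C hCt hCb using hcb
  have hcover : frontier D ⊆ ⋃ z : frontier D, U z.1 z.2 := fun x hx =>
    mem_iUnion.2 ⟨⟨x, hx⟩, hxU x hx⟩
  obtain ⟨t, ht⟩ := hfc.elim_finite_subcover (fun z : frontier D => U z.1 z.2)
    (fun z => hUo z.1 z.2) hcover
  have htcover : frontier D ⊆ ⋃ i : t, U i.1.1 i.1.2 := by
    intro x hx
    obtain ⟨z, hz, hxz⟩ := mem_iUnion₂.1 (ht hx)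
    exact mem_iUnion.2 ⟨⟨z, hz⟩, hxz⟩
  obtain ⟨δ, hδ, hLeb⟩ := lebesgue_number_lemma_of_metric hfc
    (fun i : t => hUo i.1.1 i.1.2) htcover
  set n := d - 1 with hn
  set A₀ : ℝ≥0∞ := (∑ i ∈ t, C i) * 2 ^ n with hA₀
  have hA₀t : A₀ ≠ ∞ :=
    ENNReal.mul_ne_top (by
      refine (ENNReal.sum_lt_top.2 fun i _ => ?_).ne
      exact (hCt i).lt_top) (ENNReal.pow_ne_top ENNReal.ofNat_ne_top)
  have hsmall : ∀ (x : EuclideanSpace ℝ (Fin d)) (r : ℝ), 0 ≤ r → 2 * r < δ →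
      μH[(d : ℝ) - 1] (frontier D ∩ closedBall x r)
        ≤ A₀ * ENNReal.ofReal r ^ n := by
    intro x r hr h2r
    rcases (frontier D ∩ closedBall x r).eq_empty_or_nonempty with hE | ⟨z, hzf, hzb⟩
    · simp [hE]
    obtain ⟨i, hi⟩ := hLeb z hzf
    have hsub : frontier D ∩ closedBall x r
        ⊆ (frontier D ∩ U i.1.1 i.1.2) ∩ closedBall z (2 * r) := by
      rintro y ⟨hyf, hyb⟩
      have hdist : dist y z ≤ 2 * r := by
        calc dist y z ≤ dist y x + dist x z := dist_triangle y x z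
          _ ≤ r + r := add_le_add (mem_closedBall.1 hyb)
              (by rw [dist_comm]; exact mem_closedBall.1 hzb)
          _ = 2 * r := by ring
      exact ⟨⟨hyf, hi (mem_ball.2 (lt_of_le_of_lt hdist h2r))⟩, mem_closedBall.2 hdist⟩
    calc μH[(d : ℝ) - 1] (frontier D ∩ closedBall x r)
        ≤ μH[(d : ℝ) - 1] ((frontier D ∩ U i.1.1 i.1.2) ∩ closedBall z (2 * r)) :=
          measure_mono hsub
      _ ≤ C i.1 * ENNReal.ofReal (2 * r) ^ n := hCb i.1 z (2 * r)
      _ ≤ (∑ j ∈ t, C j) * (2 * ENNReal.ofReal r) ^ n := by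
          rw [ENNReal.ofReal_mul (by norm_num : (0:ℝ) ≤ 2), ENNReal.ofReal_ofNat]
          exact mul_le_mul' (Finset.single_le_sum (fun j _ => (zero_le : 0 ≤ C j)) i.2) le_rfl
      _ = A₀ * ENNReal.ofReal r ^ n := by rw [hA₀, mul_pow]; ring
  -- total boundary measure is finite
  have hMfin : μH[(d : ℝ) - 1] (frontier D) ≠ ∞ := by
    have hcov2 : frontier D ⊆ ⋃ z : frontier D, ball z.1 (δ / 4) := fun x hx =>
      mem_iUnion.2 ⟨⟨x, hx⟩, mem_ball_self (by linarith)⟩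
    obtain ⟨t₂, ht₂⟩ := hfc.elim_finite_subcover (fun z : frontier D => ball z.1 (δ / 4))
      (fun z => isOpen_ball) hcov2
    have hb : ∀ z : frontier D, μH[(d : ℝ) - 1] (frontier D ∩ closedBall z.1 (δ / 4))
        ≤ A₀ * ENNReal.ofReal (δ / 4) ^ n :=
      fun z => hsmall z.1 (δ / 4) (by linarith) (by linarith)
    have hmono : μH[(d : ℝ) - 1] (frontier D)
        ≤ ∑ z ∈ t₂, μH[(d : ℝ) - 1] (frontier D ∩ closedBall z.1 (δ / 4)) := by
      refine le_trans (measure_mono ?_) (measure_biUnion_finset_le _ _)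
      intro x hx
      obtain ⟨z, hz, hxz⟩ := mem_iUnion₂.1 (ht₂ hx)
      exact mem_iUnion₂.2 ⟨z, hz, hx, ball_subset_closedBall hxz⟩
    refine ne_top_of_le_ne_top ?_ (hmono.trans (Finset.sum_le_sum fun z _ => hb z))
    refine (ENNReal.sum_lt_top.2 fun z _ => ?_).ne
    exact (ENNReal.mul_lt_top hA₀t.lt_top (ENNReal.pow_ne_top ENNReal.ofReal_ne_top).lt_top)
  set M := μH[(d : ℝ) - 1] (frontier D) with hM
  have hδ2 : ENNReal.ofReal (δ / 2) ^ n ≠ 0 :=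
    pow_ne_zero n (ne_of_gt (ENNReal.ofReal_pos.2 (by linarith)))
  have hδ2t : ENNReal.ofReal (δ / 2) ^ n ≠ ∞ := ENNReal.pow_ne_top ENNReal.ofReal_ne_top
  refine ⟨A₀ + M * (ENNReal.ofReal (δ / 2) ^ n)⁻¹, ?_, ?_⟩
  · exact ENNReal.add_ne_top.2 ⟨hA₀t, ENNReal.mul_ne_top hMfin (ENNReal.inv_ne_top.2 hδ2)⟩
  intro x r
  rcases lt_or_ge r 0 with hr | hr
  · simp [Metric.closedBall_eq_empty.2 hr]
  rcases lt_or_ge (2 * r) δ with h2r | h2r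
  · exact (hsmall x r hr h2r).trans (mul_le_mul' le_self_add le_rfl)
  · have h1 : μH[(d : ℝ) - 1] (frontier D ∩ closedBall x r) ≤ M :=
      measure_mono inter_subset_left
    have h2 : ENNReal.ofReal (δ / 2) ^ n ≤ ENNReal.ofReal r ^ n :=
      pow_le_pow_left' (ENNReal.ofReal_le_ofReal (by linarith)) n
    have h3 : M ≤ M * (ENNReal.ofReal (δ / 2) ^ n)⁻¹ * ENNReal.ofReal r ^ n := by
      calc M = M * ((ENNReal.ofReal (δ / 2) ^ n)⁻¹ * ENNReal.ofReal (δ / 2) ^ n) := by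
            rw [ENNReal.inv_mul_cancel hδ2 hδ2t, mul_one]
        _ = M * (ENNReal.ofReal (δ / 2) ^ n)⁻¹ * ENNReal.ofReal (δ / 2) ^ n := by ring
        _ ≤ _ := mul_le_mul' le_rfl h2
    refine (h1.trans h3).trans ?_
    exact mul_le_mul' le_add_self le_rfl

lemma summ_aux (n : ℕ) : Summable (fun k : ℕ => ((k:ℝ)+1)^n * Real.exp (-(k:ℝ))) := by
  have hr : ‖Real.exp (-1)‖ < 1 := by
    rw [Real.norm_eq_abs, abs_of_pos (Real.exp_pos _)]
    exact Real.exp_lt_one_iff.2 (by norm_num)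
  have h := summable_pow_mul_geometric_of_norm_lt_one (R := ℝ) n hr
  have h2 := (summable_nat_add_iff 1).2 h
  have h3 := h2.mul_left (Real.exp 1)
  refine h3.congr fun k => ?_
  have he : Real.exp (-1) ^ (k + 1) = Real.exp (-((k:ℝ)+1)) := by
    rw [← Real.exp_nat_mul]
    push_cast
    ring_nf
  push_cast
  rw [he, show Real.exp 1 * (((k:ℝ)+1)^n * Real.exp (-((k:ℝ)+1)))
      = ((k:ℝ)+1)^n * (Real.exp 1 * Real.exp (-((k:ℝ)+1))) from by ring,
    ← Real.exp_add, show (1:ℝ) + -((k:ℝ)+1) = -(k:ℝ) from by ring]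

/-- surface-integral estimate (2.6) for the Gaussian upper bound. -/
theorem gaussian_surface_integral_estimate
    (d : ℕ) (hd : 1 ≤ d) (D : Set (EuclideanSpace ℝ (Fin d)))
    (hD : IsBoundedLipschitzDomain d D) (T : ℝ) (hT : 0 < T) (c₂ : ℝ) (hc₂ : 1 ≤ c₂) :
    ∃ C₁ : ℝ, 0 < C₁ ∧ ∃ C₂ : ℝ, 0 < C₂ ∧
      ∀ t : ℝ, 0 < t → t ≤ T → ∀ x ∈ closure D,
        (∫ y in frontier D,
            t ^ (-(d : ℝ) / 2) * Real.exp (-(dist y x ^ 2) / (c₂ * t)) ∂(μH[(d : ℝ) - 1]))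
          ≤ C₁ / Real.sqrt t + C₂ := by
  obtain ⟨A, hAt, hAb⟩ := ahlfors d hd D hD
  set n := d - 1 with hn
  have hnc : ((n:ℕ):ℝ) = (d:ℝ) - 1 := by
    rw [hn, Nat.cast_sub hd]; push_cast; ring
  set S : ℝ := ∑' k : ℕ, ((k:ℝ)+1)^n * Real.exp (-(k:ℝ)) with hS
  have hSsm := summ_aux n
  have hS1 : (1:ℝ) ≤ S := by
    have h0 := Summable.le_tsum hSsm 0 (fun k _ => by positivity)
    simpa using h0
  have hSpos : 0 < S := lt_of_lt_of_le one_pos hS1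
  have hc₂0 : (0:ℝ) < c₂ := lt_of_lt_of_le one_pos hc₂
  have hArnn : 0 ≤ A.toReal := ENNReal.toReal_nonneg
  refine ⟨(A.toReal + 1) * S * c₂ ^ (((d:ℝ) - 1)/2), by positivity, 1, one_pos, ?_⟩
  intro t ht htT x hx
  set ρ := Real.sqrt (c₂ * t) with hρdef
  have hct : 0 < c₂ * t := by positivity
  have hρ : 0 < ρ := Real.sqrt_pos.2 hct
  have hρ2 : ρ ^ 2 = c₂ * t := Real.sq_sqrt hct.le
  -- pointwise bound by a sum of indicators
  have hpt : ∀ y : EuclideanSpace ℝ (Fin d),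
      ENNReal.ofReal (Real.exp (-(dist y x ^ 2) / (c₂ * t)))
        ≤ ∑' k : ℕ, (closedBall x (((k:ℝ)+1)*ρ)).indicator
            (fun _ => ENNReal.ofReal (Real.exp (-(k:ℝ)))) y := by
    intro y
    set k := ⌊dist y x / ρ⌋₊ with hk
    have hdnn : 0 ≤ dist y x := dist_nonneg
    have hk1 : dist y x ≤ ((k:ℝ)+1)*ρ := by
      have := Nat.lt_floor_add_one (dist y x / ρ)
      rw [div_lt_iff₀ hρ] at this
      exact this.le
    have hk0 : (k:ℝ)*ρ ≤ dist y x := by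
      have := Nat.floor_le (by positivity : 0 ≤ dist y x / ρ)
      rw [le_div_iff₀ hρ] at this
      exact this
    have hexp : Real.exp (-(dist y x ^ 2) / (c₂ * t)) ≤ Real.exp (-(k:ℝ)) := by
      apply Real.exp_le_exp.2
      rw [neg_div, neg_le_neg_iff]
      have hksq : (k:ℝ)^2 * (c₂ * t) ≤ dist y x ^ 2 := by
        rw [← hρ2]
        have hmm := mul_self_le_mul_self
          (mul_nonneg (Nat.cast_nonneg (α := ℝ) k) hρ.le) hk0
        nlinarith [hmm]
      have h2 : (k:ℝ)^2 ≤ dist y x ^ 2 / (c₂ * t) := by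
        rw [le_div_iff₀ hct]; linarith
      have hkk : (k:ℝ) ≤ (k:ℝ)^2 := by
        rcases Nat.eq_zero_or_pos k with h | h
        · simp [h]
        · have h1 : (1:ℝ) ≤ (k:ℝ) := by exact_mod_cast h
          nlinarith
      linarith
    calc ENNReal.ofReal (Real.exp (-(dist y x ^ 2) / (c₂ * t)))
        ≤ ENNReal.ofReal (Real.exp (-(k:ℝ))) := ENNReal.ofReal_le_ofReal hexp
      _ = (closedBall x (((k:ℝ)+1)*ρ)).indicator
            (fun _ => ENNReal.ofReal (Real.exp (-(k:ℝ)))) y := by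
          rw [indicator_of_mem (mem_closedBall.2 hk1)]
      _ ≤ _ := ENNReal.le_tsum k
  -- lintegral bound
  have hsummand : ∀ k : ℕ, 0 ≤ Real.exp (-(k:ℝ)) * (((k:ℝ)+1)*ρ)^n := fun k => by positivity
  have hsm2 : Summable (fun k : ℕ => Real.exp (-(k:ℝ)) * (((k:ℝ)+1)*ρ)^n) := by
    refine ((hSsm.mul_left (ρ^n)).congr fun k => ?_)
    rw [mul_pow]; ring
  have htsumval : ∑' k : ℕ, Real.exp (-(k:ℝ)) * (((k:ℝ)+1)*ρ)^n = ρ^n * S := by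
    rw [hS, ← tsum_mul_left]
    exact tsum_congr fun k => by rw [mul_pow]; ring
  have hlint : (∫⁻ y in frontier D,
      ENNReal.ofReal (Real.exp (-(dist y x ^ 2) / (c₂ * t))) ∂(μH[(d : ℝ) - 1]))
        ≤ A * ENNReal.ofReal (ρ^n * S) := by
    calc (∫⁻ y in frontier D,
        ENNReal.ofReal (Real.exp (-(dist y x ^ 2) / (c₂ * t))) ∂(μH[(d : ℝ) - 1]))
        ≤ ∫⁻ y in frontier D, ∑' k : ℕ, (closedBall x (((k:ℝ)+1)*ρ)).indicator
            (fun _ => ENNReal.ofReal (Real.exp (-(k:ℝ)))) y ∂(μH[(d : ℝ) - 1]) :=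
          lintegral_mono fun y => hpt y
      _ = ∑' k : ℕ, ∫⁻ y in frontier D, (closedBall x (((k:ℝ)+1)*ρ)).indicator
            (fun _ => ENNReal.ofReal (Real.exp (-(k:ℝ)))) y ∂(μH[(d : ℝ) - 1]) :=
          lintegral_tsum fun k => ((measurable_const.indicator
            measurableSet_closedBall).aemeasurable)
      _ ≤ ∑' k : ℕ, ENNReal.ofReal (Real.exp (-(k:ℝ))) *
            (A * ENNReal.ofReal (((k:ℝ)+1)*ρ) ^ n) := by
          refine ENNReal.tsum_le_tsum fun k => ?_
          rw [lintegral_indicator_const measurableSet_closedBall,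
            Measure.restrict_apply measurableSet_closedBall, inter_comm]
          exact mul_le_mul' le_rfl (hAb x (((k:ℝ)+1)*ρ))
      _ = A * ∑' k : ℕ, ENNReal.ofReal (Real.exp (-(k:ℝ)) * (((k:ℝ)+1)*ρ)^n) := by
          rw [← ENNReal.tsum_mul_left]
          refine tsum_congr fun k => ?_
          rw [ENNReal.ofReal_mul (Real.exp_nonneg _), ENNReal.ofReal_pow (by positivity)]
          ring
      _ = A * ENNReal.ofReal (ρ^n * S) := by
          rw [← ENNReal.ofReal_tsum_of_nonneg hsummand hsm2, htsumval]
  -- convert to Bochner integral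
  have hcont : Continuous fun y : EuclideanSpace ℝ (Fin d) =>
      Real.exp (-(dist y x ^ 2) / (c₂ * t)) := by fun_prop
  have hInn : 0 ≤ᵐ[(μH[(d : ℝ) - 1] : Measure (EuclideanSpace ℝ (Fin d))).restrict (frontier D)]
      fun y => Real.exp (-(dist y x ^ 2) / (c₂ * t)) :=
    Filter.Eventually.of_forall fun y => Real.exp_nonneg _
  have hIeq : (∫ y in frontier D, Real.exp (-(dist y x ^ 2) / (c₂ * t)) ∂(μH[(d : ℝ) - 1]))
      = (∫⁻ y in frontier D,
          ENNReal.ofReal (Real.exp (-(dist y x ^ 2) / (c₂ * t))) ∂(μH[(d : ℝ) - 1])).toReal :=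
    integral_eq_lintegral_of_nonneg_ae hInn hcont.aestronglyMeasurable
  have hIle : (∫ y in frontier D, Real.exp (-(dist y x ^ 2) / (c₂ * t)) ∂(μH[(d : ℝ) - 1]))
      ≤ A.toReal * (ρ^n * S) := by
    rw [hIeq]
    have h1 : (A * ENNReal.ofReal (ρ^n * S)).toReal = A.toReal * (ρ^n * S) := by
      rw [ENNReal.toReal_mul, ENNReal.toReal_ofReal (by positivity)]
    rw [← h1]
    exact ENNReal.toReal_mono (ENNReal.mul_ne_top hAt ENNReal.ofReal_ne_top) hlint
  -- put things together
  have hconst : (0:ℝ) ≤ t ^ (-(d : ℝ) / 2) := Real.rpow_nonneg ht.le _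
  have hmain : (∫ y in frontier D,
      t ^ (-(d : ℝ) / 2) * Real.exp (-(dist y x ^ 2) / (c₂ * t)) ∂(μH[(d : ℝ) - 1]))
      ≤ t ^ (-(d : ℝ) / 2) * (A.toReal * (ρ^n * S)) := by
    rw [MeasureTheory.integral_const_mul]
    exact mul_le_mul_of_nonneg_left hIle hconst
  refine hmain.trans ?_
  -- final arithmetic with rpow
  have hρn : ρ ^ n = c₂ ^ (((d:ℝ)-1)/2) * t ^ (((d:ℝ)-1)/2) := by
    rw [← Real.rpow_natCast ρ n, hρdef, Real.sqrt_eq_rpow, ← Real.rpow_mul hct.le, hnc,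
      show 1/2 * ((d:ℝ)-1) = ((d:ℝ)-1)/2 from by ring, Real.mul_rpow hc₂0.le ht.le]
  have hts : t ^ (-(d:ℝ)/2) * t ^ (((d:ℝ)-1)/2) = t ^ (-(1:ℝ)/2) := by
    rw [← Real.rpow_add ht]
    congr 1
    ring
  have htinv : t ^ (-(1:ℝ)/2) = (Real.sqrt t)⁻¹ := by
    rw [show (-(1:ℝ)/2) = -(1/2) from by ring, Real.rpow_neg ht.le, ← Real.sqrt_eq_rpow]
  have heq : t ^ (-(d : ℝ) / 2) * (A.toReal * (ρ^n * S))
      = A.toReal * S * c₂ ^ (((d:ℝ)-1)/2) / Real.sqrt t := by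
    calc t ^ (-(d : ℝ) / 2) * (A.toReal * (ρ^n * S))
        = A.toReal * S * c₂ ^ (((d:ℝ)-1)/2)
            * (t ^ (-(d:ℝ)/2) * t ^ (((d:ℝ)-1)/2)) := by rw [hρn]; ring
      _ = A.toReal * S * c₂ ^ (((d:ℝ)-1)/2) * (Real.sqrt t)⁻¹ := by rw [hts, htinv]
      _ = A.toReal * S * c₂ ^ (((d:ℝ)-1)/2) / Real.sqrt t := by ring
  rw [heq]
  have hstp : 0 < Real.sqrt t := Real.sqrt_pos.2 ht
  have hmono : A.toReal * S * c₂ ^ (((d:ℝ)-1)/2) / Real.sqrt t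
      ≤ (A.toReal + 1) * S * c₂ ^ (((d:ℝ)-1)/2) / Real.sqrt t := by
    gcongr
    linarith
  linarith
end
end
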